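/- Let H be a finite-dimensional real vector space with a nondegenerate symmetric bilinear form q of signature (1, n) with n ≥ 1. Let h ∈ H satisfy q(h,h) > 0 and let v ∈ H be such that h and v are linearly independent. Then there exists a ∈ ℝ such that q(h + a v, h + a v) = 0; moreover h + a v ≠ 0 for every such a. -/

import Mathlib

open Module

-- expansion of q on a pair
lemma qexp {H : Type*} [AddCommGroup H] [Module ℝ H]
    (q : H →ₗ[ℝ] H →ₗ[ℝ] ℝ) (α β : ℝ) (x y : H) :
    q (α • x + β • y) (α • x + β • y)
      = α^2 * q x x + α*β*(q x y + q y x) + β^2 * q y y := by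
  simp [map_add, map_smul]
  ring

-- negativity on span of negative basis vectors
lemma neg_span {H : Type*} [AddCommGroup H] [Module ℝ H] [FiniteDimensional ℝ H]
    (n : ℕ) (q : H →ₗ[ℝ] H →ₗ[ℝ] ℝ)
    (b : Basis (Fin (n + 1)) ℝ H)
    (horth : ∀ i j, i ≠ j → q (b i) (b j) = 0)
    (hneg : ∀ i, i ≠ 0 → q (b i) (b i) < 0)
    (u : H) (hu : u ∈ Submodule.span ℝ (Set.range (fun i : {i : Fin (n+1) // i ≠ 0} => b i)))
    (hu0 : u ≠ 0) : q u u < 0 := by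
  have hcoord : (b.coord 0) u = 0 := by
    have hle : Submodule.span ℝ (Set.range (fun i : {i : Fin (n+1) // i ≠ 0} => b i))
        ≤ LinearMap.ker (b.coord 0) := by
      rw [Submodule.span_le]
      rintro _ ⟨⟨i, hi⟩, rfl⟩
      simp [Module.Basis.coord_apply, Module.Basis.repr_self, Finsupp.single_eq_of_ne' hi]
    exact hle hu
  set c : Fin (n+1) → ℝ := fun i => b.repr u i with hc
  have hc0 : c 0 = 0 := hcoord
  have hrepr : ∑ i, c i • b i = u := b.sum_repr u
  have hquu : q u u = ∑ i, (c i)^2 * q (b i) (b i) := by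
    conv_lhs => rw [← hrepr]
    rw [map_sum]
    refine Finset.sum_congr rfl fun x _ => ?_
    rw [map_sum, LinearMap.sum_apply]
    rw [Finset.sum_eq_single x]
    · simp only [map_smul, LinearMap.smul_apply, smul_eq_mul]; ring
    · intro j _ hj
      simp [smul_eq_mul, horth j x hj]
    · simp
  obtain ⟨i, hi⟩ : ∃ i, c i ≠ 0 := by
    by_contra hall
    push_neg at hall
    exact hu0 (by rw [← hrepr]; simp [hall])
  have hi0 : i ≠ 0 := fun e => hi (e ▸ hc0)
  rw [hquu]
  have : ∑ i, (c i)^2 * q (b i) (b i) < ∑ _i : Fin (n+1), (0:ℝ) := by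
    apply Finset.sum_lt_sum
    · intro j _
      by_cases hj : j = 0
      · simp [hj, hc0]
      · exact mul_nonpos_of_nonneg_of_nonpos (sq_nonneg _) (le_of_lt (hneg j hj))
    · exact ⟨i, Finset.mem_univ i, mul_neg_of_pos_of_neg (pow_pos (abs_pos.mpr hi) 2 |>.trans_eq (by rw [sq_abs])) (hneg i hi0)⟩
  simpa using this

lemma perp_neg {H : Type*} [AddCommGroup H] [Module ℝ H] [FiniteDimensional ℝ H]
    (n : ℕ) (hdim : Module.finrank ℝ H = n + 1)
    (q : H →ₗ[ℝ] H →ₗ[ℝ] ℝ) (hsymm : ∀ x y : H, q x y = q y x)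
    (b : Basis (Fin (n + 1)) ℝ H)
    (horth : ∀ i j, i ≠ j → q (b i) (b j) = 0)
    (hneg : ∀ i, i ≠ 0 → q (b i) (b i) < 0)
    (h x : H) (hQ : 0 < q h h) (hperp : q h x = 0) (hx0 : x ≠ 0) :
    q x x < 0 := by
  by_contra hcon
  push_neg at hcon
  -- h, x linearly independent
  have hli : LinearIndependent ℝ ![h, x] := by
    rw [LinearIndependent.pair_iff]
    intro s t hst
    have h1 : q h (s • h + t • x) = 0 := by rw [hst]; simp
    rw [map_add, map_smul, map_smul] at h1
    simp only [smul_eq_mul, hperp, mul_zero, add_zero] at h1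
    have hs : s = 0 := by
      rcases mul_eq_zero.mp h1 with hs | hq
      · exact hs
      · exact absurd hq (ne_of_gt hQ)
    refine ⟨hs, ?_⟩
    rw [hs, zero_smul, zero_add] at hst
    rcases smul_eq_zero.mp hst with ht | hx
    · exact ht
    · exact absurd hx hx0
  set P := Submodule.span ℝ (Set.range ![h, x]) with hP
  set N := Submodule.span ℝ (Set.range (fun i : {i : Fin (n+1) // i ≠ 0} => b i)) with hN
  have hPrank : Module.finrank ℝ P = 2 := by
    rw [hP, finrank_span_eq_card hli]; simp
  have hNrank : Module.finrank ℝ N = n := by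
    have hliN : LinearIndependent ℝ (fun i : {i : Fin (n+1) // i ≠ 0} => b i) :=
      b.linearIndependent.comp Subtype.val Subtype.val_injective
    rw [hN, finrank_span_eq_card hliN]
    rw [Fintype.card_subtype_compl, Fintype.card_subtype_eq, Fintype.card_fin]
    simp
  have hint : 1 ≤ Module.finrank ℝ (P ⊓ N : Submodule ℝ H) := by
    have hsum := Submodule.finrank_sup_add_finrank_inf_eq P N
    have hle : Module.finrank ℝ (P ⊔ N : Submodule ℝ H) ≤ n + 1 :=
      hdim ▸ Submodule.finrank_le _
    omega
  obtain ⟨u, huPN, hu0⟩ : ∃ u ∈ P ⊓ N, u ≠ 0 := by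
    rw [← Submodule.ne_bot_iff]
    intro hbot
    rw [hbot, finrank_bot] at hint
    omega
  obtain ⟨huP, huN⟩ := huPN
  -- u ∈ N gives q u u < 0
  have hneg' : q u u < 0 := neg_span n q b horth hneg u huN hu0
  -- u ∈ P gives q u u ≥ 0
  have hpos : 0 ≤ q u u := by
    have : u ∈ Submodule.span ℝ ({h, x} : Set H) := by
      rw [hP] at huP
      simp only [SetLike.mem_coe] at huP
      convert huP using 2
      ext y
      simp [Matrix.range_cons, Matrix.range_empty, Set.pair_comm]
    obtain ⟨α, β, hαβ⟩ := Submodule.mem_span_pair.mp this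
    rw [← hαβ, qexp]
    rw [hperp, hsymm x h, hperp]
    have := sq_nonneg α
    have := sq_nonneg β
    nlinarith
  linarith

theorem stmt11 (H : Type*) [AddCommGroup H] [Module ℝ H] [FiniteDimensional ℝ H]
    (n : ℕ) (hn : 1 ≤ n) (hdim : Module.finrank ℝ H = n + 1)
    (q : H →ₗ[ℝ] H →ₗ[ℝ] ℝ) (hsymm : ∀ x y : H, q x y = q y x)
    (hnd : ∀ x : H, (∀ y : H, q x y = 0) → x = 0)
    -- `q` has signature `(1, n)`: there is an orthogonal basis with one vector of
    -- positive square and `n` vectors of negative square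
    (hsig : ∃ b : Basis (Fin (n + 1)) ℝ H,
      (∀ i j, i ≠ j → q (b i) (b j) = 0) ∧
      0 < q (b 0) (b 0) ∧ ∀ i, i ≠ 0 → q (b i) (b i) < 0)
    (h v : H) (hh : 0 < q h h) (hli : LinearIndependent ℝ ![h, v]) :
    (∃ a : ℝ, q (h + a • v) (h + a • v) = 0) ∧
    ∀ a : ℝ, q (h + a • v) (h + a • v) = 0 → h + a • v ≠ 0 := by
  obtain ⟨b, horth, hb0, hneg⟩ := hsig
  set Q := q h h with hQdef
  have hQne : Q ≠ 0 := ne_of_gt hh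
  set cc := q h v / Q with hccdef
  set w := v - cc • h with hwdef
  have hvw : v = w + cc • h := by rw [hwdef]; abel
  have hperp : q h w = 0 := by
    rw [hwdef, map_sub, map_smul]
    simp only [smul_eq_mul, hccdef]
    field_simp
    rw [← hQdef]; ring
  have hw0 : w ≠ 0 := by
    intro hw
    have : cc • h + (-1 : ℝ) • v = 0 := by
      rw [hwdef] at hw
      have : v = cc • h := by rwa [sub_eq_zero] at hw
      rw [this]; module
    have := (LinearIndependent.pair_iff.mp hli cc (-1) this).2
    norm_num at this
  have hW : q w w < 0 := perp_neg n hdim q hsymm b horth hneg h w hh hperp hw0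
  set W := q w w with hWdef
  -- expansion of f(a)
  have hexp : ∀ a : ℝ, q (h + a • v) (h + a • v) = (1 + a*cc)^2 * Q + a^2 * W := by
    intro a
    have : h + a • v = (1 + a*cc) • h + a • w := by
      rw [hvw]; module
    rw [this, qexp, hperp, hsymm w h, hperp]
    ring
  constructor
  · -- existence of a root
    set s := Real.sqrt Q with hsdef
    set t := Real.sqrt (-W) with htdef
    have hs : s^2 = Q := Real.sq_sqrt (le_of_lt hh)
    have ht : t^2 = -W := Real.sq_sqrt (by linarith)
    have hspos : 0 < s := Real.sqrt_pos.mpr hh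
    have htpos : 0 < t := Real.sqrt_pos.mpr (by linarith)
    by_cases hden : cc * s + t = 0
    · -- cc = -t/s
      refine ⟨s / (2*t), ?_⟩
      rw [hexp]
      have hcc : cc = -t / s := by
        field_simp
        linarith
      have hWt : W = -t^2 := by linarith
      rw [hcc, ← hs, hWt]
      field_simp
      ring
    · refine ⟨-s / (cc * s + t), ?_⟩
      rw [hexp]
      have hWt : W = -t^2 := by linarith
      rw [← hs, hWt]
      have hden' : s * cc + t ≠ 0 := by rwa [mul_comm]
      field_simp
      ring
  · -- nonvanishing
    intro a _ hzero
    have : (1:ℝ) • h + a • v = 0 := by rw [one_smul]; exact hzero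
    have := (LinearIndependent.pair_iff.mp hli 1 a this).1
    norm_num at this
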